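/- Let H₁, H₂ be Hilbert spaces, F : H₁ → H₂ continuous, u† ∈ H₁ with F(u†) = y†, and y^δ ∈ H₂ with ‖y† − y^δ‖ ≤ δ for some δ > 0. Let (Ψ⁽ᵐ⁾) be a sequence of closed subspaces of H₁ with orthogonal projections Π_m such that ‖(I − Π_m)u†‖ → 0 as m → ∞, and for each m let u⁽ᵐ⁾ ∈ Ψ⁽ᵐ⁾ minimize ‖F(·) − y^δ‖ over Ψ⁽ᵐ⁾. Then for every τ > 1 there exists M such that ‖F(u⁽ᴹ⁾) − y^δ‖ ≤ τδ. -/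

import Mathlib

open Filter

/-- Lemma 2.2: the discrepancy-principle stopping index is well defined. -/
theorem stmt8 {H₁ H₂ : Type*}
    [NormedAddCommGroup H₁] [InnerProductSpace ℝ H₁] [CompleteSpace H₁]
    [NormedAddCommGroup H₂] [InnerProductSpace ℝ H₂] [CompleteSpace H₂]
    (F : H₁ → H₂) (hF : Continuous F)
    (udag : H₁) (ydag yδ : H₂) (δ : ℝ) (hδ : 0 < δ)
    (hsol : F udag = ydag) (hnoise : ‖ydag - yδ‖ ≤ δ)
    (Ψ : ℕ → Submodule ℝ H₁) (hcl : ∀ m, IsClosed (Ψ m : Set H₁))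
    [∀ m, CompleteSpace (Ψ m)]
    (hproj : Tendsto (fun m => ‖udag - (Submodule.orthogonalProjectionOnto (Ψ m) udag : H₁)‖) atTop (nhds 0))
    (u : ℕ → H₁) (hu : ∀ m, u m ∈ Ψ m)
    (hmin : ∀ m, ∀ v ∈ Ψ m, ‖F (u m) - yδ‖ ≤ ‖F v - yδ‖)
    (τ : ℝ) (hτ : 1 < τ) :
    ∃ M : ℕ, ‖F (u M) - yδ‖ ≤ τ * δ := by
  have htend : Tendsto (fun m => ((Submodule.orthogonalProjectionOnto (Ψ m) udag : H₁))) atTop (nhds udag) := by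
    rw [tendsto_iff_norm_sub_tendsto_zero]
    simpa [norm_sub_rev] using hproj
  have hF' : Tendsto (fun m => ‖F ((Submodule.orthogonalProjectionOnto (Ψ m) udag : H₁)) - yδ‖) atTop
      (nhds ‖ydag - yδ‖) := by
    have := ((hF.tendsto udag).comp htend).sub_const yδ
    rw [hsol] at this
    exact this.norm
  have hlt : ‖ydag - yδ‖ < τ * δ :=
    lt_of_le_of_lt hnoise (by nlinarith)
  have := (hF'.eventually (eventually_le_nhds hlt)).exists
  obtain ⟨M, hM⟩ := this
  exact ⟨M, le_trans (hmin M _ (Submodule.orthogonalProjectionOnto (Ψ M) udag).2) hM⟩
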